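/- Let k = 𝔽_q be the finite field with q elements and let g ∈ GL₂(A) be the upper triangular matrix with diagonal entries a, d ∈ Aˣ and upper-right entry b ∈ A. If a − d ∈ εA ∖ {0} and b ∈ εA, then Fib(g) has exactly 2q elements. -/

import Mathlib

open Matrix
open scoped DualNumber

/-- A submodule `V` of `A²` (where `A = k[ε]` is the ring of dual numbers) is free of
rank 1 if it is generated by a vector `v ∉ ε·A²`. -/
def IsFreeRankOne {k : Type*} [Field k]
    (V : Submodule (DualNumber k) (Fin 2 → DualNumber k)) : Prop :=
  ∃ v : Fin 2 → DualNumber k,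
    (¬ ∃ u : Fin 2 → DualNumber k, v = (ε : DualNumber k) • u) ∧
    V = Submodule.span (DualNumber k) {v}

/-- `Fib g` is the set of free rank-1 `A`-submodules `V₂` of `A²` with `g·V₂ = V₂`. -/
def Fib {k : Type*} [Field k] (g : GL (Fin 2) (DualNumber k)) :
    Set (Submodule (DualNumber k) (Fin 2 → DualNumber k)) :=
  {V | IsFreeRankOne V ∧
    Submodule.map (Matrix.mulVecLin (g : Matrix (Fin 2) (Fin 2) (DualNumber k))) V = V}

namespace FibAux
variable {k : Type*} [Field k]

lemma eps_mul_eq (x : DualNumber k) : (ε : DualNumber k) * x = .inr x.fst := by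
  ext <;> simp

lemma decomp (x : DualNumber k) : x = .inl x.fst + ε * .inl x.snd := by
  ext <;> simp

lemma vec2_eq {u v : Fin 2 → DualNumber k} (h0 : u 0 = v 0) (h1 : u 1 = v 1) :
    u = v := funext fun i => by fin_cases i <;> assumption

lemma notFree_iff (v : Fin 2 → DualNumber k) :
    (∃ u : Fin 2 → DualNumber k, v = (ε : DualNumber k) • u) ↔
      (v 0).fst = 0 ∧ (v 1).fst = 0 := by
  constructor
  · rintro ⟨u, rfl⟩
    constructor <;> simp [Pi.smul_apply, smul_eq_mul]
  · rintro ⟨h0, h1⟩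
    refine ⟨![.inl (v 0).snd, .inl (v 1).snd], ?_⟩
    refine vec2_eq ?_ ?_ <;>
      simp only [Pi.smul_apply, smul_eq_mul, Matrix.cons_val_zero, Matrix.cons_val_one,
        Matrix.head_cons, eps_mul_eq] <;> ext <;> simp [h0, h1]

lemma mulVec_upper (a b d : DualNumber k) (v : Fin 2 → DualNumber k) :
    (!![a, b; 0, d]).mulVec v = ![a * v 0 + b * v 1, d * v 1] := by
  refine vec2_eq ?_ ?_ <;>
    simp [Matrix.mulVec, dotProduct, Fin.sum_univ_two, Matrix.vecHead, Matrix.vecTail]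

lemma map_span_single (M : Matrix (Fin 2) (Fin 2) (DualNumber k))
    (v : Fin 2 → DualNumber k) :
    Submodule.map M.mulVecLin (Submodule.span (DualNumber k) {v}) =
      Submodule.span (DualNumber k) {M.mulVec v} := by
  rw [Submodule.map_span, Set.image_singleton]; rfl

lemma span_eq_exists {u v : Fin 2 → DualNumber k}
    (h : Submodule.span (DualNumber k) {u} = Submodule.span (DualNumber k) {v}) :
    ∃ c : DualNumber k, ∀ i, u i = c * v i := by
  have hu : u ∈ Submodule.span (DualNumber k) {v} := by
    rw [← h]; exact Submodule.mem_span_singleton_self u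
  obtain ⟨c, hc⟩ := Submodule.mem_span_singleton.mp hu
  exact ⟨c, fun i => by rw [← hc]; rfl⟩

end FibAux

open FibAux TrivSqZeroExt

set_option maxHeartbeats 800000

/-- Case 3: over `k = 𝔽_q`, if `g` is upper triangular with unit diagonal
entries `a, d` and upper-right entry `b`, with `a − d ∈ εA ∖ {0}` and `b ∈ εA`, then
`Fib g` has exactly `2q` elements. -/
theorem fib_card_case_three {k : Type*} [Field k] [Fintype k]
    (a d b : DualNumber k) (ha : IsUnit a) (hd : IsUnit d)
    (g : GL (Fin 2) (DualNumber k))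
    (hg : (g : Matrix (Fin 2) (Fin 2) (DualNumber k)) = !![a, b; 0, d])
    (had : ∃ z : DualNumber k, a - d = (ε : DualNumber k) * z)
    (had' : a - d ≠ 0)
    (hb : ∃ z : DualNumber k, b = (ε : DualNumber k) * z) :
    Nat.card (Fib g) = 2 * Fintype.card k := by
  obtain ⟨z, hz⟩ := had
  obtain ⟨w, hw⟩ := hb
  have heps : (ε : DualNumber k) * ε = 0 := DualNumber.eps_mul_eps
  have hzfst : z.fst ≠ 0 := by
    intro h
    exact had' (by rw [hz, eps_mul_eq, h, inr_zero])
  set x₀ : k := -(w.fst / z.fst) with hx₀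
  set Fv : Bool × k → (Fin 2 → DualNumber k) := fun p =>
    match p with
    | (true, t) => ![1, ε * .inl t]
    | (false, t) => ![.inl x₀ + ε * .inl t, 1]
    with hFvdef
  have hFvT : ∀ t : k, Fv (true, t) = ![1, ε * .inl t] := fun _ => rfl
  have hFvF : ∀ t : k, Fv (false, t) = ![.inl x₀ + ε * .inl t, 1] := fun _ => rfl
  set F : Bool × k → Submodule (DualNumber k) (Fin 2 → DualNumber k) :=
    fun p => Submodule.span (DualNumber k) {Fv p} with hF
  have hFapp : ∀ p, F p = Submodule.span (DualNumber k) {Fv p} := fun _ => rfl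
  have key1 : ∀ t : k, (a - d) * (.inl x₀ + ε * .inl t) + b = 0 := by
    intro t
    rw [hz, hw]
    have h5 : (ε : DualNumber k) * z * (.inl x₀ + ε * .inl t)
        = .inr (z.fst * x₀) := by
      rw [mul_assoc, eps_mul_eq]
      congr 1
      simp
    rw [h5, eps_mul_eq, ← inr_add]
    have h6 : z.fst * x₀ + w.fst = 0 := by
      rw [hx₀]; field_simp; try ring
    rw [h6, inr_zero]
  have hfree : ∀ p, ¬ ∃ u : Fin 2 → DualNumber k, Fv p = (ε : DualNumber k) • u := by
    rintro ⟨s, t⟩ h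
    rw [notFree_iff] at h
    cases s
    · have := h.2; rw [hFvF] at this; simp at this
    · have := h.1; rw [hFvT] at this; simp at this
  have hmem : ∀ p, F p ∈ Fib g := by
    rintro ⟨s, t⟩
    refine ⟨⟨Fv (s, t), hfree _, hFapp _⟩, ?_⟩
    rw [hFapp, map_span_single, hg]
    cases s
    · have h7 : (!![a, b; 0, d]).mulVec (Fv (false, t)) = d • Fv (false, t) := by
        rw [mulVec_upper, hFvF]
        refine vec2_eq ?_ ?_
        · simp only [Matrix.cons_val_zero, Matrix.cons_val_one, Matrix.head_cons,
            Pi.smul_apply, smul_eq_mul]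
          linear_combination key1 t
        · simp only [Matrix.cons_val_zero, Matrix.cons_val_one, Matrix.head_cons,
            Pi.smul_apply, smul_eq_mul]
          try ring
      rw [h7]
      exact Submodule.span_singleton_smul_eq hd _
    · have h7 : (!![a, b; 0, d]).mulVec (Fv (true, t)) = a • Fv (true, t) := by
        rw [mulVec_upper, hFvT]
        refine vec2_eq ?_ ?_
        · simp only [Matrix.cons_val_zero, Matrix.cons_val_one, Matrix.head_cons,
            Pi.smul_apply, smul_eq_mul]
          linear_combination ((ε : DualNumber k) * .inl t) * hw +
            (w * .inl t) * heps
        · simp only [Matrix.cons_val_zero, Matrix.cons_val_one, Matrix.head_cons,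
            Pi.smul_apply, smul_eq_mul]
          linear_combination (-((ε : DualNumber k) * .inl t)) * hz -
            (z * .inl t) * heps
      rw [h7]
      exact Submodule.span_singleton_smul_eq ha _
  have hsurj : ∀ V ∈ Fib g, ∃ p, F p = V := by
    rintro V ⟨⟨v, hvf, rfl⟩, hmap⟩
    have hmv : (g : Matrix (Fin 2) (Fin 2) (DualNumber k)).mulVec v ∈
        Submodule.span (DualNumber k) {v} := by
      have h8 : (g : Matrix (Fin 2) (Fin 2) (DualNumber k)).mulVec v ∈
          Submodule.map (Matrix.mulVecLin (g : Matrix (Fin 2) (Fin 2) (DualNumber k)))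
            (Submodule.span (DualNumber k) {v}) :=
        Submodule.mem_map_of_mem (Submodule.mem_span_singleton_self v)
      rwa [hmap] at h8
    obtain ⟨c, hc⟩ := Submodule.mem_span_singleton.mp hmv
    rw [hg, mulVec_upper] at hc
    have hc0 : c * v 0 = a * v 0 + b * v 1 := by
      have := congrFun hc 0; simpa [Pi.smul_apply, smul_eq_mul] using this
    have hc1 : c * v 1 = d * v 1 := by
      have := congrFun hc 1; simpa [Pi.smul_apply, smul_eq_mul] using this
    by_cases hy : (v 1).fst = 0
    · -- second family
      have hx : (v 0).fst ≠ 0 := fun h => hvf ((notFree_iff v).mpr ⟨h, hy⟩)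
      obtain ⟨xu, hxu⟩ := isUnit_iff_isUnit_fst.mpr (isUnit_iff_ne_zero.mpr hx)
      refine ⟨(true, ((↑xu⁻¹ : DualNumber k) * v 1).snd),
        (hFapp (true, ((↑xu⁻¹ : DualNumber k) * v 1).snd)).trans ?_⟩
      have hgen : Fv (true, ((↑xu⁻¹ : DualNumber k) * v 1).snd)
          = (↑xu⁻¹ : DualNumber k) • v := by
        rw [hFvT]
        refine vec2_eq ?_ ?_ <;>
          simp only [Matrix.cons_val_zero, Matrix.cons_val_one, Matrix.head_cons,
            Pi.smul_apply, smul_eq_mul]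
        · rw [← hxu, ← Units.val_mul, inv_mul_cancel, Units.val_one]
        · rw [eps_mul_eq]
          ext
          · simp [hy]
          · simp
      rw [hgen]
      exact Submodule.span_singleton_smul_eq (Units.isUnit _) _
    · -- first family
      obtain ⟨yu, hyu⟩ := isUnit_iff_isUnit_fst.mpr (isUnit_iff_ne_zero.mpr hy)
      have hy1 : (↑yu⁻¹ : DualNumber k) * v 1 = 1 := by
        rw [← hyu, ← Units.val_mul, inv_mul_cancel, Units.val_one]
      have hcd : c = d := by
        calc c = c * ((↑yu⁻¹ : DualNumber k) * v 1) := by rw [hy1, mul_one]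
          _ = (c * v 1) * (↑yu⁻¹ : DualNumber k) := by ring
          _ = (d * v 1) * (↑yu⁻¹ : DualNumber k) := by rw [hc1]
          _ = d * ((↑yu⁻¹ : DualNumber k) * v 1) := by ring
          _ = d := by rw [hy1, mul_one]
      rw [hcd] at hc0
      have h3 : (a - d) * v 0 + b * v 1 = 0 := by linear_combination -hc0
      have hEq : (a - d) * ((↑yu⁻¹ : DualNumber k) * v 0) + b = 0 := by
        linear_combination (↑yu⁻¹ : DualNumber k) * h3 - b * hy1
      have hXfst : ((↑yu⁻¹ : DualNumber k) * v 0).fst = x₀ := by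
        rw [hz, hw, mul_assoc, eps_mul_eq, eps_mul_eq, ← inr_add] at hEq
        have h4 := congrArg TrivSqZeroExt.snd hEq
        rw [snd_inr, snd_zero, fst_mul] at h4
        rw [hx₀, ← neg_div, eq_div_iff hzfst]
        linear_combination h4
      refine ⟨(false, ((↑yu⁻¹ : DualNumber k) * v 0).snd),
        (hFapp (false, ((↑yu⁻¹ : DualNumber k) * v 0).snd)).trans ?_⟩
      have hgen : Fv (false, ((↑yu⁻¹ : DualNumber k) * v 0).snd)
          = (↑yu⁻¹ : DualNumber k) • v := by
        rw [hFvF]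
        refine vec2_eq ?_ ?_ <;>
          simp only [Matrix.cons_val_zero, Matrix.cons_val_one, Matrix.head_cons,
            Pi.smul_apply, smul_eq_mul]
        · rw [← hXfst]
          exact (decomp _).symm
        · exact hy1.symm
      rw [hgen]
      exact Submodule.span_singleton_smul_eq (Units.isUnit _) _
  have hrange : Fib g = Set.range F := by
    ext V
    constructor
    · intro hV
      obtain ⟨p, hp⟩ := hsurj V hV
      exact ⟨p, hp⟩
    · rintro ⟨p, rfl⟩
      exact hmem p
  have hinj : Function.Injective F := by
    rintro ⟨s, t⟩ ⟨s', t'⟩ h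
    rw [hFapp, hFapp] at h
    obtain ⟨c, hcc⟩ := span_eq_exists h
    cases s <;> cases s'
    · -- false false
      have h1 := hcc 1
      rw [hFvF, hFvF] at h1
      simp only [Matrix.cons_val_one, Matrix.head_cons, Matrix.cons_val_zero, mul_one] at h1
      have h0 := hcc 0
      rw [hFvF, hFvF] at h0
      simp only [Matrix.cons_val_zero] at h0
      rw [← h1, one_mul] at h0
      have ht : t = t' := by
        have := congrArg TrivSqZeroExt.snd h0
        simpa [eps_mul_eq] using this
      rw [ht]
    · -- false true
      have h1 := hcc 1
      rw [hFvF, hFvT] at h1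
      simp only [Matrix.cons_val_one, Matrix.head_cons] at h1
      have h9 := congrArg TrivSqZeroExt.fst h1
      rw [eps_mul_eq] at h9
      simp at h9
    · -- true false
      have h1 := hcc 1
      rw [hFvT, hFvF] at h1
      simp only [Matrix.cons_val_one, Matrix.head_cons, Matrix.cons_val_zero, mul_one] at h1
      have h0 := hcc 0
      rw [hFvT, hFvF] at h0
      simp only [Matrix.cons_val_zero, Matrix.cons_val_one, Matrix.head_cons] at h0
      rw [← h1] at h0
      have h9 := congrArg TrivSqZeroExt.fst h0
      rw [eps_mul_eq] at h9
      simp at h9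
    · -- true true
      have h0 := hcc 0
      rw [hFvT, hFvT] at h0
      simp only [Matrix.cons_val_zero, mul_one] at h0
      have h1 := hcc 1
      rw [hFvT, hFvT] at h1
      simp only [Matrix.cons_val_one, Matrix.head_cons] at h1
      rw [← h0, one_mul] at h1
      have ht : t = t' := by
        have := congrArg TrivSqZeroExt.snd h1
        simpa [eps_mul_eq] using this
      rw [ht]
  rw [hrange, Nat.card_range_of_injective hinj, Nat.card_prod]
  simp [Nat.card_eq_fintype_card, two_mul]
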